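/- arXiv:1410.7698 — 3 statements merged into one kernel-verified Lean document; each statement's English description precedes it below -/
import Mathlib

section
/- The four eigenvalues σ of the 4×4 matrix arising from the Δ₄ = 0 condition for the radial Teukolsky equation with s = -2 and a = 0 are σ = -1 ± √(1 + 12iω) and σ = -1 ± √(1 - 12iω); that is, the determinant condition factors as ((σ+1)² - (1+12iω))((σ+1)² - (1-12iω)) = 0. -/
open Complex Matrix

lemma sq_cpow_half (z : ℂ) : (z ^ ((1 : ℂ) / 2)) ^ 2 = z := by
  by_cases h : z = 0
  · simp [h, Complex.zero_cpow, (by norm_num : (1 : ℂ)/2 ≠ 0)]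
  · rw [sq, ← Complex.cpow_add _ _ h]
    norm_num

lemma sq_eq_iff (x c : ℂ) :
    x ^ 2 = c ↔ x = c ^ ((1 : ℂ)/2) ∨ x = -(c ^ ((1 : ℂ)/2)) := by
  constructor
  · intro h
    have h2 : (x - c ^ ((1:ℂ)/2)) * (x + c ^ ((1:ℂ)/2)) = 0 := by
      have := sq_cpow_half c
      ring_nf
      linear_combination h - this
    rcases mul_eq_zero.mp h2 with h3 | h3
    · left; linear_combination h3
    · right; linear_combination h3
  · rintro (rfl | rfl) <;> simp [sq_cpow_half c]

/-- For s = -2 and ā = 0 (Schwarzschild), the determinant of the 4×4 matrix of the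
Δ₄ = 0 polynomial-solution condition for the radial Teukolsky equation factors as
((σ+1)² - (1+12iω))((σ+1)² - (1-12iω)), so its four eigenvalues are
σ = -1 ± √(1+12iω) and σ = -1 ± √(1-12iω). -/
theorem stmt_8 (ω σ : ℂ)
    (M : Matrix (Fin 4) (Fin 4) ℂ)
    (hM : M = !![-σ, 1 - 2 * I * ω + I * (2 * ω), 0, 0;
                 -12 * I * ω, -2 - σ, -4 * I * ω + 2 * I * (2 * ω), 0;
                 0, -8 * I * ω, -2 - σ, -3 - 6 * I * ω + 3 * I * (2 * ω);
                 0, 0, -4 * I * ω, -σ]) :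
    M.det = ((σ + 1) ^ 2 - (1 + 12 * I * ω)) * ((σ + 1) ^ 2 - (1 - 12 * I * ω)) ∧
    (M.det = 0 ↔
      σ = -1 + (1 + 12 * I * ω) ^ ((1 : ℂ) / 2) ∨ σ = -1 - (1 + 12 * I * ω) ^ ((1 : ℂ) / 2) ∨
      σ = -1 + (1 - 12 * I * ω) ^ ((1 : ℂ) / 2) ∨ σ = -1 - (1 - 12 * I * ω) ^ ((1 : ℂ) / 2)) := by
  have hdet : M.det = ((σ + 1) ^ 2 - (1 + 12 * I * ω)) * ((σ + 1) ^ 2 - (1 - 12 * I * ω)) := by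
    subst hM
    simp [Matrix.det_succ_row_zero, Fin.sum_univ_succ, Fin.succAbove]
    have hI : I ^ 2 = -1 := Complex.I_sq
    ring_nf
  refine ⟨hdet, ?_⟩
  rw [hdet, mul_eq_zero, sub_eq_zero, sub_eq_zero, sq_eq_iff, sq_eq_iff]
  constructor
  · rintro ((h | h) | (h | h))
    · exact Or.inl (by linear_combination h)
    · exact Or.inr (Or.inl (by linear_combination h))
    · exact Or.inr (Or.inr (Or.inl (by linear_combination h)))
    · exact Or.inr (Or.inr (Or.inr (by linear_combination h)))
  · rintro (h | h | h | h)
    · exact Or.inl (Or.inl (by linear_combination h))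
    · exact Or.inl (Or.inr (by linear_combination h))
    · exact Or.inr (Or.inl (by linear_combination h))
    · exact Or.inr (Or.inr (by linear_combination h))
end

section
/- The function H(z) = z² - (ℓ(ℓ+1)/3) z³ satisfies the confluent Heun equation in nonsymmetrical canonical form with parameters p = iΩ̄, α = -3, γ = -1, δ = -1 + 4iΩ̄, and σ = σ₃₃ = -1 + √(1 + 12iΩ̄), where Ω̄ = -(i/12)(ℓ-1)ℓ(ℓ+1)(ℓ+2) and ℓ ≥ 2 is an integer. -/
open Complex

set_option maxHeartbeats 1000000

/-- H(z) = z² - (ℓ(ℓ+1)/3) z³ satisfies the nonsymmetrical canonical confluent Heun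
equation with parameters p = iΩ̄, α = -3, γ = -1, δ = -1 + 4iΩ̄,
σ = σ₃₃ = -1 + √(1+12iΩ̄) = ℓ(ℓ+1) - 2, where Ω̄ = -(i/12)(ℓ-1)ℓ(ℓ+1)(ℓ+2). -/
theorem stmt_10 (ℓ : ℕ) (hℓ : 2 ≤ ℓ) (Ω p α γ δ σ w : ℂ)
    (hΩ : Ω = -(I / 12) * ((ℓ : ℂ) - 1) * (ℓ : ℂ) * ((ℓ : ℂ) + 1) * ((ℓ : ℂ) + 2))
    (hp : p = I * Ω) (hα : α = -3) (hγ : γ = -1) (hδ : δ = -1 + 4 * I * Ω)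
    (hw : w ^ 2 = 1 + 12 * I * Ω) (hw' : w = (ℓ : ℂ) ^ 2 + (ℓ : ℂ) - 1)
    (hσ : σ = -1 + w)
    (H : ℂ → ℂ) (hH : H = fun z : ℂ => z ^ 2 - ((ℓ : ℂ) * ((ℓ : ℂ) + 1) / 3) * z ^ 3) :
    ∀ z : ℂ, z ≠ 0 → z ≠ 1 →
      deriv (deriv H) z + (4 * p + γ / z + δ / (z - 1)) * deriv H z
        + (4 * α * p * z - σ) / (z * (z - 1)) * H z = 0 := by
  set L : ℂ := (ℓ : ℂ) with hL
  have hd : deriv H = fun z : ℂ => 2 * z - (L * (L + 1) / 3) * (3 * z ^ 2) := by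
    funext z
    rw [hH]
    rw [deriv_fun_sub (by fun_prop) (by fun_prop), deriv_pow_field,
      deriv_const_mul _ (by fun_prop), deriv_pow_field]
    ring
  have hdd : deriv (deriv H) = fun z : ℂ => 2 - (L * (L + 1) / 3) * (6 * z) := by
    funext z
    rw [hd]
    rw [deriv_fun_sub (by fun_prop) (by fun_prop), deriv_const_mul _ (by fun_prop),
      deriv_const_mul _ (by fun_prop), deriv_const_mul _ (by fun_prop), deriv_pow_field,
      deriv_id'']
    ring
  have hp' : p = (L - 1) * L * (L + 1) * (L + 2) / 12 := by
    rw [hp, hΩ]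
    linear_combination (-((L - 1) * L * (L + 1) * (L + 2) / 12)) * Complex.I_mul_I
  have hδ' : δ = -1 + (L - 1) * L * (L + 1) * (L + 2) / 3 := by
    rw [hδ, hΩ]
    linear_combination (-((L - 1) * L * (L + 1) * (L + 2) / 3)) * Complex.I_mul_I
  have hσ' : σ = L ^ 2 + L - 2 := by rw [hσ, hw']; ring
  intro z hz0 hz1
  have hz1' : z - 1 ≠ 0 := sub_ne_zero.mpr hz1
  rw [hdd, hd, hH, hp', hα, hγ, hδ', hσ']
  field_simp
  ring
end

section
/- The function H(z) = 1 - (ℓ(ℓ+1)/3) z satisfies the confluent Heun equation in nonsymmetrical canonical form with parameters p = iΩ̄, α = -1, γ = 3, δ = -1 + 4iΩ̄, and σ = 1 + √(1 + 12iΩ̄) = ℓ² + ℓ, where Ω̄ = -(i/12)(ℓ-1)ℓ(ℓ+1)(ℓ+2) and ℓ ≥ 2. -/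
open Complex

/-- H(z) = 1 - (ℓ(ℓ+1)/3) z satisfies the nonsymmetrical canonical confluent Heun
equation with parameters p = iΩ̄, α = -1, γ = 3, δ = -1 + 4iΩ̄,
σ = 1 + √(1+12iΩ̄) = ℓ² + ℓ, where Ω̄ = -(i/12)(ℓ-1)ℓ(ℓ+1)(ℓ+2). -/
theorem stmt_11 (ℓ : ℕ) (hℓ : 2 ≤ ℓ) (Ω p α γ δ σ w : ℂ)
    (hΩ : Ω = -(I / 12) * ((ℓ : ℂ) - 1) * (ℓ : ℂ) * ((ℓ : ℂ) + 1) * ((ℓ : ℂ) + 2))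
    (hp : p = I * Ω) (hα : α = -1) (hγ : γ = 3) (hδ : δ = -1 + 4 * I * Ω)
    (hw : w ^ 2 = 1 + 12 * I * Ω) (hw' : w = (ℓ : ℂ) ^ 2 + (ℓ : ℂ) - 1)
    (hσ : σ = 1 + w)
    (H : ℂ → ℂ) (hH : H = fun z : ℂ => 1 - ((ℓ : ℂ) * ((ℓ : ℂ) + 1) / 3) * z) :
    σ = (ℓ : ℂ) ^ 2 + (ℓ : ℂ) ∧
    ∀ z : ℂ, z ≠ 0 → z ≠ 1 →
      deriv (deriv H) z + (4 * p + γ / z + δ / (z - 1)) * deriv H z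
        + (4 * α * p * z - σ) / (z * (z - 1)) * H z = 0 := by
  have hd1 : deriv H = fun _ : ℂ => -((ℓ : ℂ) * ((ℓ : ℂ) + 1) / 3) := by
    funext z
    subst hH
    exact (((hasDerivAt_const z (1:ℂ)).sub
      (((hasDerivAt_id z).const_mul ((ℓ : ℂ) * ((ℓ : ℂ) + 1) / 3)))).congr_deriv
      (by ring)).deriv
  constructor
  · rw [hσ, hw']; ring
  · intro z hz0 hz1
    have hz1' : z - 1 ≠ 0 := sub_ne_zero.mpr hz1
    rw [hd1]
    simp only [deriv_const, hH]
    subst hΩ hp hα hγ hδ hσ hw'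
    field_simp
    ring_nf
    simp only [Complex.I_sq]
    ring
end
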